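/- Let K be a valued field, B₀ ⊆ Kⁿ a ball, and C = B₁ ∪ … ∪ B_m ⊆ B₀ a union of finitely many disjoint points and balls Bᵢ, and similarly C' = B'₁ ∪ … ∪ B'_m. Suppose there exists a risometry φ : B₀ → B₀ with φ(Bᵢ) = B'ᵢ for all i. Then any other risometry φ' : B₀ → B₀ with φ'(C) = C' also satisfies φ'(Bᵢ) = B'ᵢ for every i. -/
import Mathlib


/-- The sup-norm on `Kⁿ` induced by a valuation `v : K → Γ₀`. -/
noncomputable def supVal {K Γ₀ : Type*} [Field K] [LinearOrderedCommGroupWithZero Γ₀]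
    (v : Valuation K Γ₀) {n : ℕ} (x : Fin n → K) : Γ₀ :=
  letI : OrderBot Γ₀ := { bot := 0, bot_le := fun _ => zero_le' }
  Finset.univ.sup fun i => v (x i)

/-- A (valuative) ball in `Kⁿ` with respect to the sup-norm. -/
def IsBall {K Γ₀ : Type*} [Field K] [LinearOrderedCommGroupWithZero Γ₀]
    (v : Valuation K Γ₀) {n : ℕ} (B : Set (Fin n → K)) : Prop :=
  B.Infinite ∧ ∀ x ∈ B, ∀ x' ∈ B, ∀ y : Fin n → K,
    supVal v (x - y) ≤ supVal v (x - x') → y ∈ B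

/-- A risometry from `B₁` onto `B₂`. -/
def IsRisometryOn {K Γ₀ : Type*} [Field K] [LinearOrderedCommGroupWithZero Γ₀]
    (v : Valuation K Γ₀) {n : ℕ} (φ : (Fin n → K) → (Fin n → K))
    (B₁ B₂ : Set (Fin n → K)) : Prop :=
  Set.BijOn φ B₁ B₂ ∧
    ∀ x₁ ∈ B₁, ∀ x₂ ∈ B₁, x₁ ≠ x₂ →
      supVal v (φ x₁ - φ x₂ - (x₁ - x₂)) < supVal v (x₁ - x₂)

namespace RisoProofAux

variable {K Γ₀ : Type*} [Field K] [LinearOrderedCommGroupWithZero Γ₀]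

section SupVal

variable (v : Valuation K Γ₀) {n : ℕ}

lemma le_supVal (x : Fin n → K) (i : Fin n) : v (x i) ≤ supVal v x := by
  letI : OrderBot Γ₀ := { bot := 0, bot_le := fun _ => zero_le' }
  exact Finset.le_sup (f := fun i => v (x i)) (Finset.mem_univ i)

lemma supVal_le {x : Fin n → K} {c : Γ₀} (h : ∀ i, v (x i) ≤ c) : supVal v x ≤ c := by
  letI : OrderBot Γ₀ := { bot := 0, bot_le := fun _ => zero_le' }
  exact Finset.sup_le fun i _ => h i

lemma supVal_zero : supVal v (0 : Fin n → K) = 0 :=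
  le_antisymm (supVal_le v fun i => by simp) zero_le'

lemma supVal_ne_zero {x : Fin n → K} (hx : x ≠ 0) : supVal v x ≠ 0 := by
  obtain ⟨i, hi⟩ : ∃ i, x i ≠ 0 := by
    by_contra h; push_neg at h; exact hx (funext h)
  intro h0
  have h1 : v (x i) ≤ 0 := h0 ▸ le_supVal v x i
  exact hi (v.zero_iff.mp (le_antisymm h1 zero_le'))

lemma supVal_add_le (x y : Fin n → K) : supVal v (x + y) ≤ max (supVal v x) (supVal v y) :=
  supVal_le v fun i =>
    le_trans (v.map_add (x i) (y i)) (max_le_max (le_supVal v x i) (le_supVal v y i))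

lemma supVal_neg (x : Fin n → K) : supVal v (-x) = supVal v x := by
  refine le_antisymm (supVal_le v fun i => ?_) (supVal_le v fun i => ?_)
  · rw [show (-x) i = -(x i) from rfl, v.map_neg]; exact le_supVal v x i
  · rw [← v.map_neg]; exact le_supVal v (-x) i

lemma supVal_sub_comm (a b : Fin n → K) : supVal v (a - b) = supVal v (b - a) := by
  rw [← supVal_neg v (a - b), neg_sub]

lemma supVal_smul (c : K) (x : Fin n → K) : supVal v (c • x) = v c * supVal v x := by
  letI : OrderBot Γ₀ := { bot := 0, bot_le := fun _ => zero_le' }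
  refine le_antisymm (supVal_le v fun i => ?_) ?_
  · rw [show (c • x) i = c * x i from rfl, v.map_mul]
    exact mul_le_mul_right (le_supVal v x i) _
  · rcases isEmpty_or_nonempty (Fin n) with he | hne
    · have h1 : supVal v x ≤ 0 := supVal_le v fun i => isEmptyElim i
      rw [le_antisymm h1 zero_le', mul_zero]; exact zero_le'
    · obtain ⟨i, -, hi⟩ := Finset.exists_mem_eq_sup Finset.univ Finset.univ_nonempty
        fun i => v (x i)
      have hx : supVal v x = v (x i) := hi
      calc v c * supVal v x = v (c * x i) := by rw [hx, v.map_mul]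
        _ = v ((c • x) i) := rfl
        _ ≤ supVal v (c • x) := le_supVal v _ i

lemma supVal_eq_of_sub_lt {a b : Fin n → K} (h : supVal v (a - b) < supVal v b) :
    supVal v a = supVal v b := by
  have e : a = (a - b) + b := by abel
  have h1 : supVal v a ≤ supVal v b := by
    calc supVal v a = supVal v ((a - b) + b) := by rw [← e]
      _ ≤ max (supVal v (a - b)) (supVal v b) := supVal_add_le v _ _
      _ ≤ supVal v b := max_le h.le le_rfl
  refine le_antisymm h1 ?_
  by_contra hlt
  rw [not_le] at hlt
  have e2 : b = (b - a) + a := by abel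
  have : supVal v b ≤ max (supVal v (b - a)) (supVal v a) := by
    calc supVal v b = supVal v ((b - a) + a) := by rw [← e2]
      _ ≤ max (supVal v (b - a)) (supVal v a) := supVal_add_le v _ _
  have hba : supVal v (b - a) < supVal v b := by rw [supVal_sub_comm]; exact h
  exact absurd (lt_of_le_of_lt this (max_lt hba hlt)) (lt_irrefl _)

lemma supVal_add_eq_left {a e : Fin n → K} (h : supVal v e < supVal v a) :
    supVal v (a + e) = supVal v a :=
  supVal_eq_of_sub_lt v (by rwa [add_sub_cancel_left])

lemma supVal_sum_lt {ι : Type*} (S : Finset ι) (f : ι → Fin n → K) {r : Γ₀} (hr : r ≠ 0)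
    (h : ∀ u ∈ S, supVal v (f u) < r) : supVal v (∑ u ∈ S, f u) < r := by
  induction S using Finset.cons_induction with
  | empty =>
    rw [Finset.sum_empty, supVal_zero]
    exact lt_of_le_of_ne zero_le' (Ne.symm hr)
  | cons a s ha ih =>
    rw [Finset.sum_cons]
    exact lt_of_le_of_lt (supVal_add_le v _ _)
      (max_lt (h a (Finset.mem_cons_self a s)) (ih fun u hu => h u (Finset.mem_cons_of_mem hu)))

end SupVal

section Riso

variable (v : Valuation K Γ₀) {n : ℕ}

lemma riso_dist_eq {B₀ : Set (Fin n → K)} {ψ : (Fin n → K) → (Fin n → K)}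
    (hψ : IsRisometryOn v ψ B₀ B₀) {x₁ x₂ : Fin n → K} (h₁ : x₁ ∈ B₀) (h₂ : x₂ ∈ B₀) :
    supVal v (ψ x₁ - ψ x₂) = supVal v (x₁ - x₂) := by
  rcases eq_or_ne x₁ x₂ with rfl | hne
  · simp [supVal_zero]
  · exact supVal_eq_of_sub_lt v (hψ.2 x₁ h₁ x₂ h₂ hne)

lemma ball_sep {P : Set (Fin n → K)} (hP : IsBall v P) {x x' w : Fin n → K}
    (hx : x ∈ P) (hx' : x' ∈ P) (hw : w ∉ P) :
    supVal v (x - x') < supVal v (x - w) := by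
  by_contra h
  rw [not_lt] at h
  exact hw (hP.2 x hx x' hx' w h)

lemma inv_riso {B₀ : Set (Fin n → K)} {ψ : (Fin n → K) → (Fin n → K)}
    (hψ : IsRisometryOn v ψ B₀ B₀) :
    IsRisometryOn v (Function.invFunOn ψ B₀) B₀ B₀ ∧
      Set.LeftInvOn (Function.invFunOn ψ B₀) ψ B₀ ∧
      Set.RightInvOn (Function.invFunOn ψ B₀) ψ B₀ := by
  set g := Function.invFunOn ψ B₀ with hg
  have hlinv : Set.LeftInvOn g ψ B₀ := hψ.1.injOn.leftInvOn_invFunOn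
  have hrinv : Set.RightInvOn g ψ B₀ := hψ.1.surjOn.rightInvOn_invFunOn
  have hgbij : Set.BijOn g B₀ B₀ := Set.BijOn.symm ⟨hrinv, hlinv⟩ hψ.1
  refine ⟨⟨hgbij, ?_⟩, hlinv, hrinv⟩
  intro u₁ h₁ u₂ h₂ hne
  have hg₁ : g u₁ ∈ B₀ := hgbij.mapsTo h₁
  have hg₂ : g u₂ ∈ B₀ := hgbij.mapsTo h₂
  have e₁ : ψ (g u₁) = u₁ := hrinv h₁
  have e₂ : ψ (g u₂) = u₂ := hrinv h₂
  have hgne : g u₁ ≠ g u₂ := fun h => hne (by rw [← e₁, ← e₂, h])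
  have key : g u₁ - g u₂ - (u₁ - u₂) = -(ψ (g u₁) - ψ (g u₂) - (g u₁ - g u₂)) := by
    rw [e₁, e₂]; abel
  rw [key, supVal_neg]
  calc supVal v (ψ (g u₁) - ψ (g u₂) - (g u₁ - g u₂)) < supVal v (g u₁ - g u₂) :=
        hψ.2 _ hg₁ _ hg₂ hgne
    _ = supVal v (ψ (g u₁) - ψ (g u₂)) := (riso_dist_eq v hψ hg₁ hg₂).symm
    _ = supVal v (u₁ - u₂) := by rw [e₁, e₂]

lemma comp_riso {B₀ : Set (Fin n → K)} {f g : (Fin n → K) → (Fin n → K)}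
    (hf : IsRisometryOn v f B₀ B₀) (hg : IsRisometryOn v g B₀ B₀) :
    IsRisometryOn v (fun x => g (f x)) B₀ B₀ := by
  refine ⟨hg.1.comp hf.1, ?_⟩
  intro x₁ h₁ x₂ h₂ hne
  have hf1 : f x₁ ∈ B₀ := hf.1.mapsTo h₁
  have hf2 : f x₂ ∈ B₀ := hf.1.mapsTo h₂
  have hfne : f x₁ ≠ f x₂ := fun h => hne (hf.1.injOn h₁ h₂ h)
  have key : g (f x₁) - g (f x₂) - (x₁ - x₂)
      = (g (f x₁) - g (f x₂) - (f x₁ - f x₂)) + (f x₁ - f x₂ - (x₁ - x₂)) := by abel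
  rw [key]
  refine lt_of_le_of_lt (supVal_add_le v _ _) (max_lt ?_ (hf.2 x₁ h₁ x₂ h₂ hne))
  calc supVal v (g (f x₁) - g (f x₂) - (f x₁ - f x₂)) < supVal v (f x₁ - f x₂) :=
        hg.2 _ hf1 _ hf2 hfne
    _ = supVal v (x₁ - x₂) := riso_dist_eq v hf h₁ h₂

end Riso

section Main

variable (v : Valuation K Γ₀) [CharZero K] {n : ℕ}

lemma val_natCast_sub_le (hres : ∀ k : ℕ, k ≠ 0 → v (k : K) = 1) (a b : ℕ) :
    v ((a : K) - (b : K)) ≤ 1 := by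
  rcases eq_or_ne a b with rfl | hab
  · simp
  · rcases lt_or_gt_of_ne hab with h | h
    · rw [show (a : K) - (b : K) = -((b : K) - (a : K)) by ring, v.map_neg,
        ← Nat.cast_sub h.le]
      exact (hres _ (Nat.sub_ne_zero_of_lt h)).le
    · rw [← Nat.cast_sub h.le]
      exact (hres _ (Nat.sub_ne_zero_of_lt h)).le

lemma val_natCast_sub_eq (hres : ∀ k : ℕ, k ≠ 0 → v (k : K) = 1) {a b : ℕ} (hab : a ≠ b) :
    v ((a : K) - (b : K)) = 1 := by
  rcases lt_or_gt_of_ne hab with h | h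
  · rw [show (a : K) - (b : K) = -((b : K) - (a : K)) by ring, v.map_neg,
      ← Nat.cast_sub h.le]
    exact hres _ (Nat.sub_ne_zero_of_lt h)
  · rw [← Nat.cast_sub h.le]
    exact hres _ (Nat.sub_ne_zero_of_lt h)

/-- Claim A: a risometry of `B₀` preserving `C = ⋃ Bᵢ` maps points of the same
piece to points of the same piece. -/
lemma claimA (hres : ∀ k : ℕ, k ≠ 0 → v (k : K) = 1) {m : ℕ}
    {B₀ : Set (Fin n → K)} {B : Fin m → Set (Fin n → K)}
    (hBsub : ∀ i, B i ⊆ B₀)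
    (hBshape : ∀ i, IsBall v (B i) ∨ ∃ p, B i = {p})
    (hBdisj : ∀ i j, i ≠ j → Disjoint (B i) (B j))
    {ψ : (Fin n → K) → (Fin n → K)} (hψ : IsRisometryOn v ψ B₀ B₀)
    (hψC : ∀ x ∈ ⋃ i, B i, ψ x ∈ ⋃ i, B i)
    {i j : Fin m} {x y : Fin n → K} (hx : x ∈ B i) (hy : y ∈ B i)
    (hj : ψ x ∈ B j) : ψ y ∈ B j := by
  classical
  rcases eq_or_ne x y with rfl | hxy
  · exact hj
  have hball : IsBall v (B i) := by
    rcases hBshape i with h | ⟨p, hp⟩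
    · exact h
    · rw [hp, Set.mem_singleton_iff] at hx hy
      exact absurd (hx.trans hy.symm) hxy
  have hyx : y - x ≠ 0 := sub_ne_zero.mpr (Ne.symm hxy)
  set r : Γ₀ := supVal v (y - x) with hrdef
  have hr : r ≠ 0 := supVal_ne_zero v hyx
  set z : ℕ → (Fin n → K) := fun t => x + (t : K) • (y - x) with hzdef
  have hz0 : z 0 = x := by simp [hzdef]
  have hz1 : z 1 = y := by simp [hzdef]
  have hzsub : ∀ a b : ℕ, z a - z b = ((a : K) - (b : K)) • (y - x) := by
    intro a b
    simp only [hzdef]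
    rw [add_sub_add_left_eq_sub, ← sub_smul]
  have hznorm : ∀ a b : ℕ, supVal v (z a - z b) = v ((a : K) - (b : K)) * r := by
    intro a b; rw [hzsub, supVal_smul]
  have hvt : ∀ t : ℕ, v (t : K) ≤ 1 := by
    intro t
    rcases eq_or_ne t 0 with rfl | ht
    · simp
    · exact (hres t ht).le
  have hzx : ∀ t : ℕ, z t ∈ B i := by
    intro t
    refine hball.2 x hx y hy (z t) ?_
    have e1 : x - z t = -((t : K) • (y - x)) := by
      show x - (x + (t : K) • (y - x)) = -((t : K) • (y - x))
      abel
    have e2 : supVal v (x - z t) = v (t : K) * r := by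
      rw [e1, supVal_neg, supVal_smul]
    have e3 : supVal v (x - y) = r := by rw [supVal_sub_comm]
    rw [e2, e3]
    calc v (t : K) * r ≤ 1 * r := mul_le_mul_left (hvt t) r
      _ = r := one_mul r
  have hzB₀ : ∀ t : ℕ, z t ∈ B₀ := fun t => hBsub i (hzx t)
  have hzC : ∀ t : ℕ, z t ∈ ⋃ k, B k := fun t => Set.mem_iUnion.mpr ⟨i, hzx t⟩
  choose c hc using fun t : ℕ => Set.mem_iUnion.mp (hψC (z t) (hzC t))
  obtain ⟨t, s, hts, hcts⟩ := Fintype.exists_ne_map_eq_of_card_lt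
      (fun t : Fin (m + 2) => c t.val) (by simp)
  have htsv : (t.val : ℕ) ≠ s.val := fun h => hts (Fin.val_injective h)
  have hzne : z t.val ≠ z s.val := by
    intro h
    have h0 : ((t.val : K) - (s.val : K)) • (y - x) = 0 := by
      rw [← hzsub, h, sub_self]
    rcases smul_eq_zero.mp h0 with h1 | h1
    · exact htsv (Nat.cast_injective (sub_eq_zero.mp h1))
    · exact hyx h1
  have hψzne : ψ (z t.val) ≠ ψ (z s.val) :=
    fun h => hzne (hψ.1.injOn (hzB₀ _) (hzB₀ _) h)
  have hqt : ψ (z t.val) ∈ B (c t.val) := hc t.val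
  have hqs : ψ (z s.val) ∈ B (c t.val) := by rw [hcts]; exact hc s.val
  have hqball : IsBall v (B (c t.val)) := by
    rcases hBshape (c t.val) with h | ⟨p, hp⟩
    · exact h
    · rw [hp, Set.mem_singleton_iff] at hqt hqs
      exact absurd (hqt.trans hqs.symm) hψzne
  have hdist : supVal v (ψ (z t.val) - ψ (z s.val)) = r := by
    rw [riso_dist_eq v hψ (hzB₀ _) (hzB₀ _), hznorm, val_natCast_sub_eq v hres htsv, one_mul]
  have key0 : ∀ a : ℕ, ψ (z a) ∈ B (c t.val) := by
    intro a
    refine hqball.2 _ hqt _ hqs _ ?_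
    rw [hdist, riso_dist_eq v hψ (hzB₀ _) (hzB₀ _), hznorm]
    calc v ((t.val : K) - (a : K)) * r ≤ 1 * r :=
          mul_le_mul_left (val_natCast_sub_le v hres t.val a) r
      _ = r := one_mul r
  have hψx : ψ x ∈ B (c t.val) := by rw [← hz0]; exact key0 0
  have hψy : ψ y ∈ B (c t.val) := by rw [← hz1]; exact key0 1
  have hjq : j = c t.val := by
    by_contra h
    exact Set.disjoint_left.mp (hBdisj j (c t.val) h) hj hψx
  rw [hjq]
  exact hψy

/-- Key lemma: a risometry of `B₀` preserving `C = ⋃ Bᵢ` maps each piece into itself. -/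
lemma key_lemma (hres : ∀ k : ℕ, k ≠ 0 → v (k : K) = 1) {m : ℕ}
    {B₀ : Set (Fin n → K)} {B : Fin m → Set (Fin n → K)}
    (hBsub : ∀ i, B i ⊆ B₀)
    (hBshape : ∀ i, IsBall v (B i) ∨ ∃ p, B i = {p})
    (hBdisj : ∀ i j, i ≠ j → Disjoint (B i) (B j))
    {ψ : (Fin n → K) → (Fin n → K)} (hψ : IsRisometryOn v ψ B₀ B₀)
    (hψC : ψ '' (⋃ i, B i) = ⋃ i, B i) :
    ∀ i, ∀ x ∈ B i, ψ x ∈ B i := by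
  classical
  have hCsub : (⋃ i, B i) ⊆ B₀ := Set.iUnion_subset hBsub
  have hmapC : ∀ x ∈ ⋃ i, B i, ψ x ∈ ⋃ i, B i := fun x hx =>
    hψC ▸ Set.mem_image_of_mem ψ hx
  obtain ⟨hgriso, hlinv, hrinv⟩ := inv_riso v hψ
  set g := Function.invFunOn ψ B₀ with hgdef
  have hgC : ∀ x ∈ ⋃ i, B i, g x ∈ ⋃ i, B i := by
    intro x hx
    rw [← hψC] at hx
    obtain ⟨w, hw, rfl⟩ := hx
    rw [hlinv (hCsub hw)]
    exact hw
  have uniq : ∀ {p q : Fin m} {w : Fin n → K}, w ∈ B p → w ∈ B q → p = q := by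
    intro p q w hp hq
    by_contra h
    exact Set.disjoint_left.mp (hBdisj p q h) hp hq
  intro i x hx
  by_contra hcon
  have haC : ∀ t : ℕ, ψ^[t] x ∈ ⋃ k, B k := by
    intro t
    induction t with
    | zero => exact Set.mem_iUnion.mpr ⟨i, hx⟩
    | succ t ih => rw [Function.iterate_succ_apply']; exact hmapC _ ih
  have haB₀ : ∀ t : ℕ, ψ^[t] x ∈ B₀ := fun t => hCsub (haC t)
  choose idx hidx using fun t : ℕ => Set.mem_iUnion.mp (haC t)
  have hidx0 : idx 0 = i := uniq (by simpa using hidx 0) hx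
  have hsucc : ∀ u : ℕ, ψ^[u + 1] x = ψ (ψ^[u] x) :=
    fun u => Function.iterate_succ_apply' ψ u x
  have step : ∀ t : ℕ, idx (t + 1) ≠ idx t := by
    intro t
    induction t with
    | zero =>
      intro h
      apply hcon
      have h1 : ψ^[1] x ∈ B (idx 1) := hidx 1
      rw [h, hidx0] at h1
      simpa using h1
    | succ t ih =>
      intro h
      apply ih
      have h2 : ψ^[t + 2] x ∈ B (idx (t + 1)) := by rw [← h]; exact hidx (t + 2)
      have hgx : g (ψ^[t + 1] x) ∈ B (idx t) := by
        rw [hsucc t, hlinv (haB₀ t)]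
        exact hidx t
      have hA : g (ψ^[t + 2] x) ∈ B (idx t) :=
        claimA v hres hBsub hBshape hBdisj hgriso hgC (hidx (t + 1)) h2 hgx
      rw [hsucc (t + 1), hlinv (haB₀ (t + 1))] at hA
      exact uniq (hidx (t + 1)) hA
  have main : ∀ s t : ℕ, s < t → idx s = idx t → False := by
    intro s t hst he
    set a : ℕ → (Fin n → K) := fun u => ψ^[u] x with hadef
    set ys : ℕ → (Fin n → K) := fun u => a (u + 1) - a u with hysdef
    have hynz : ∀ u : ℕ, ys u ≠ 0 := by
      intro u h
      apply step u
      have h1 : a (u + 1) = a u := sub_eq_zero.mp h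
      refine uniq (hidx (u + 1)) ?_
      show ψ^[u + 1] x ∈ B (idx u)
      rw [show ψ^[u+1] x = a (u+1) from rfl, h1]
      exact hidx u
    set r := supVal v (ys s) with hrdef
    have hr : r ≠ 0 := supVal_ne_zero v (hynz s)
    have hstep : ∀ u : ℕ, supVal v (ys (u + 1) - ys u) < supVal v (ys u) := by
      intro u
      have hne : a (u + 1) ≠ a u := fun h => hynz u (sub_eq_zero.mpr h)
      have h1 : ys (u + 1) - ys u = ψ (a (u + 1)) - ψ (a u) - (a (u + 1) - a u) := by
        show a (u + 1 + 1) - a (u + 1) - (a (u + 1) - a u) = _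
        rw [show a (u + 1 + 1) = ψ (a (u + 1)) from hsucc (u + 1),
          show a (u + 1) = ψ (a u) from hsucc u]
      rw [h1]
      exact hψ.2 _ (haB₀ (u + 1)) _ (haB₀ u) hne
    have hsame : ∀ d : ℕ, supVal v (ys (s + d) - ys s) < r ∧ supVal v (ys (s + d)) = r := by
      intro d
      induction d with
      | zero =>
        constructor
        · rw [show ys (s + 0) = ys s from rfl, sub_self, supVal_zero]
          exact lt_of_le_of_ne zero_le' (Ne.symm hr)
        · rw [show ys (s + 0) = ys s from rfl]
      | succ d ih =>
        have h1 : supVal v (ys (s + d + 1) - ys s) < r := by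
          have e : ys (s + d + 1) - ys s
              = (ys (s + d + 1) - ys (s + d)) + (ys (s + d) - ys s) := by abel
          calc supVal v (ys (s + d + 1) - ys s)
              ≤ max (supVal v (ys (s + d + 1) - ys (s + d))) (supVal v (ys (s + d) - ys s)) := by
                rw [e]; exact supVal_add_le v _ _
            _ < r := max_lt (lt_of_lt_of_le (hstep (s + d)) (le_of_eq ih.2)) ih.1
        refine ⟨h1, ?_⟩
        show supVal v (ys (s + d + 1)) = r
        rw [supVal_eq_of_sub_lt v (a := ys (s + d + 1)) (b := ys s) (by rw [← hrdef]; exact h1)]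
    have hsum : ∑ d ∈ Finset.range (t - s), ys (s + d) = a t - a s := by
      have h := Finset.sum_range_sub (fun d => a (s + d)) (t - s)
      rw [Nat.add_sub_cancel' hst.le] at h
      calc ∑ d ∈ Finset.range (t - s), ys (s + d)
          = ∑ d ∈ Finset.range (t - s), (a (s + (d + 1)) - a (s + d)) := by
            refine Finset.sum_congr rfl fun d _ => ?_
            rw [show s + (d + 1) = s + d + 1 from rfl]
        _ = a t - (fun d => a (s + d)) 0 := h
        _ = a t - a s := by norm_num
    have hsplit : ∑ d ∈ Finset.range (t - s), ys (s + d)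
        = ((t - s : ℕ) : K) • ys s + ∑ d ∈ Finset.range (t - s), (ys (s + d) - ys s) := by
      conv_rhs => rw [Finset.sum_sub_distrib]
      rw [Finset.sum_const, Finset.card_range, Nat.cast_smul_eq_nsmul]
      abel
    have hA : supVal v (((t - s : ℕ) : K) • ys s) = r := by
      rw [supVal_smul, hres _ (Nat.sub_ne_zero_of_lt hst), one_mul]
    have hE : supVal v (∑ d ∈ Finset.range (t - s), (ys (s + d) - ys s)) < r :=
      supVal_sum_lt v _ _ hr fun u _ => (hsame u).1
    have hat : supVal v (a t - a s) = r := by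
      rw [← hsum, hsplit]
      rw [supVal_add_eq_left v (by rw [hA]; exact hE), hA]
    have hqs : a s ∈ B (idx s) := hidx s
    have hqt : a t ∈ B (idx s) := by rw [he]; exact hidx t
    have hs1 : a (s + 1) ∉ B (idx s) := by
      intro hmem
      exact step s (uniq (hidx (s + 1)) hmem)
    rcases hBshape (idx s) with hballq | ⟨p, hp⟩
    · have hlt := ball_sep v hballq hqs hqt hs1
      have e1 : supVal v (a s - a t) = r := by rw [supVal_sub_comm, hat]
      have e2 : supVal v (a s - a (s + 1)) = r := by
        rw [supVal_sub_comm, hrdef]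
      rw [e1, e2] at hlt
      exact lt_irrefl _ hlt
    · rw [hp, Set.mem_singleton_iff] at hqs hqt
      apply hr
      rw [← hat, hqt, hqs, sub_self, supVal_zero]
  obtain ⟨t, s, hts, he⟩ := Fintype.exists_ne_map_eq_of_card_lt
      (fun t : Fin (m + 1) => idx t.val) (by simp)
  have htsv : (t.val : ℕ) ≠ s.val := fun h => hts (Fin.val_injective h)
  rcases lt_or_gt_of_ne htsv with h | h
  · exact main t.val s.val h he
  · exact main s.val t.val h he.symm

end Main

end RisoProofAux

open RisoProofAux in
/-- if some risometry `φ : B₀ → B₀` maps `Bᵢ` onto `B'ᵢ` for all `i`,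
then every risometry `φ' : B₀ → B₀` with `φ'(C) = C'` (where `C = ⋃ᵢ Bᵢ`,
`C' = ⋃ᵢ B'ᵢ`) also satisfies `φ'(Bᵢ) = B'ᵢ` for every `i`. -/
theorem risometry_pieces_unique {K Γ₀ : Type*} [Field K]
    [LinearOrderedCommGroupWithZero Γ₀] (v : Valuation K Γ₀) [CharZero K]
    (hres : ∀ m : ℕ, m ≠ 0 → v (m : K) = 1)
    {n m : ℕ} (B₀ : Set (Fin n → K)) (hB₀ : IsBall v B₀)
    (B B' : Fin m → Set (Fin n → K))
    (hBsub : ∀ i, B i ⊆ B₀) (hB'sub : ∀ i, B' i ⊆ B₀)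
    (hBshape : ∀ i, IsBall v (B i) ∨ ∃ p, B i = {p})
    (hB'shape : ∀ i, IsBall v (B' i) ∨ ∃ p, B' i = {p})
    (hBdisj : ∀ i j, i ≠ j → Disjoint (B i) (B j))
    (hB'disj : ∀ i j, i ≠ j → Disjoint (B' i) (B' j))
    (φ : (Fin n → K) → (Fin n → K)) (hφ : IsRisometryOn v φ B₀ B₀)
    (hφB : ∀ i, φ '' B i = B' i)
    (φ' : (Fin n → K) → (Fin n → K)) (hφ' : IsRisometryOn v φ' B₀ B₀)
    (hφ'C : φ' '' (⋃ i, B i) = ⋃ i, B' i) :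
    ∀ i, φ' '' B i = B' i := by
  classical
  have hCsub : (⋃ i, B i) ⊆ B₀ := Set.iUnion_subset hBsub
  have hφC : φ '' (⋃ i, B i) = ⋃ i, B' i := by
    rw [Set.image_iUnion]
    exact Set.iUnion_congr hφB
  obtain ⟨hgriso, hlinv, hrinv⟩ := inv_riso v hφ
  set g := Function.invFunOn φ B₀ with hgdef
  set ψ : (Fin n → K) → (Fin n → K) := fun x => g (φ' x) with hψdef
  have hψriso : IsRisometryOn v ψ B₀ B₀ := comp_riso v hφ' hgriso
  have hψC : ψ '' (⋃ i, B i) = ⋃ i, B i := by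
    have h1 : ψ '' (⋃ i, B i) = g '' (φ' '' (⋃ i, B i)) := by
      rw [Set.image_image]
    rw [h1, hφ'C, ← hφC]
    exact (hlinv.mono hCsub).image_image
  have hkey := key_lemma v hres hBsub hBshape hBdisj hψriso hψC
  intro i
  have h2 : ψ '' B i = B i := by
    apply Set.Subset.antisymm
    · rintro _ ⟨w, hwB, rfl⟩
      exact hkey i w hwB
    · intro y hy
      have hyC : y ∈ ⋃ k, B k := Set.mem_iUnion.mpr ⟨i, hy⟩
      rw [← hψC] at hyC
      obtain ⟨w, hwC, rfl⟩ := hyC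
      obtain ⟨j, hwj⟩ := Set.mem_iUnion.mp hwC
      have hwj' : ψ w ∈ B j := hkey j w hwj
      have hij : j = i := by
        by_contra h
        exact Set.disjoint_left.mp (hBdisj j i h) hwj' hy
      exact ⟨w, hij ▸ hwj, rfl⟩
  have h3 : ∀ w ∈ B i, φ (ψ w) = φ' w := by
    intro w hwB
    exact hrinv (hφ'.1.mapsTo (hBsub i hwB))
  calc φ' '' B i = (fun w => φ (ψ w)) '' B i :=
        Set.image_congr fun w hw => (h3 w hw).symm
    _ = φ '' (ψ '' B i) := (Set.image_image φ ψ (B i)).symm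
    _ = φ '' B i := by rw [h2]
    _ = B' i := hφB i
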